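/- If G is a subgroup of S_n with n ≥ 5 and G is neither S_n nor A_n, then the index [S_n : G] is at least n. -/

import Mathlib

open Equiv Equiv.Perm Subgroup

/-- Any nontrivial normal subgroup of `Perm (Fin n)` (for `n ≥ 5`) contains a 3-cycle. -/
lemma aux_exists_threeCycle_mem {n : ℕ} (hn : 5 ≤ n) (N : Subgroup (Equiv.Perm (Fin n)))
    (hNn : N.Normal) (hN : N ≠ ⊥) : ∃ f ∈ N, Equiv.Perm.IsThreeCycle f := by
  -- pick a nontrivial element π of N
  obtain ⟨π, hπN, hπ1⟩ : ∃ π ∈ N, π ≠ 1 := by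
    by_contra h
    push_neg at h
    exact hN ((Subgroup.eq_bot_iff_forall N).2 h)
  obtain ⟨a, ha⟩ : ∃ a, π a ≠ a := by
    by_contra h
    push_neg at h
    exact hπ1 (Equiv.ext fun x => by simp [h x])
  set b := π a with hb
  have hba : b ≠ a := ha
  -- pick c ∉ {a, b}
  obtain ⟨c, hc⟩ : ∃ c, c ∉ ({a, b} : Finset (Fin n)) := by
    have hcard : (({a, b} : Finset (Fin n)))ᶜ.Nonempty := by
      rw [← Finset.card_pos, Finset.card_compl, Fintype.card_fin]
      have h2 : ({a, b} : Finset (Fin n)).card ≤ 2 := Finset.card_insert_le _ _ |>.trans (by simp)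
      omega
    obtain ⟨c, hc⟩ := hcard
    exact ⟨c, by simpa using hc⟩
  simp only [Finset.mem_insert, Finset.mem_singleton, not_or] at hc
  obtain ⟨hca, hcb⟩ := hc
  set x := π b with hx
  set y := π c with hy
  have hxb : x ≠ b := fun h => hba (π.injective (h.trans hb))
  have hxy : x ≠ y := fun h => hcb (π.injective h).symm
  have hyb : y ≠ b := fun h => hca (π.injective (h.trans hb))
  have hbc : b ≠ c := fun h => hcb h.symm
  -- the commutator g = [π, swap b c] lies in N
  have hgN : swap x y * swap b c ∈ N := by
    have h1 : swap b c * π⁻¹ * (swap b c)⁻¹ ∈ N := hNn.conj_mem _ (N.inv_mem hπN) _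
    have h2 : π * (swap b c * π⁻¹ * (swap b c)⁻¹) ∈ N := N.mul_mem hπN h1
    have heq : swap x y * swap b c = π * (swap b c * π⁻¹ * (swap b c)⁻¹) := by
      rw [hx, hy, Equiv.swap_apply_apply, Equiv.swap_inv]
      group
    rwa [heq]
  by_cases hxc : x = c
  · -- g = swap c y * swap c b is a 3-cycle
    refine ⟨swap x y * swap b c, hgN, ?_⟩
    rw [hxc, Equiv.swap_comm b c]
    exact Equiv.Perm.isThreeCycle_swap_mul_swap_same (fun h => hxy (hxc.trans h))
      (fun h => hbc h.symm) hyb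
  by_cases hyc : y = c
  · -- g = swap c x * swap c b is a 3-cycle
    refine ⟨swap x y * swap b c, hgN, ?_⟩
    rw [hyc, Equiv.swap_comm x c, Equiv.swap_comm b c]
    exact Equiv.Perm.isThreeCycle_swap_mul_swap_same (fun h => hxc h.symm)
      (fun h => hbc h.symm) hxb
  -- now x, y, b, c are pairwise distinct; pick a fifth point u
  obtain ⟨u, hu⟩ : ∃ u, u ∉ ({x, y, b, c} : Finset (Fin n)) := by
    have hcard : (({x, y, b, c} : Finset (Fin n)))ᶜ.Nonempty := by
      rw [← Finset.card_pos, Finset.card_compl, Fintype.card_fin]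
      have h4 : ({x, y, b, c} : Finset (Fin n)).card ≤ 4 := by
        apply le_trans (Finset.card_insert_le _ _)
        apply Nat.succ_le_succ
        apply le_trans (Finset.card_insert_le _ _)
        apply Nat.succ_le_succ
        exact le_trans (Finset.card_insert_le _ _) (by simp)
      omega
    obtain ⟨u, hu⟩ := hcard
    exact ⟨u, by simpa using hu⟩
  simp only [Finset.mem_insert, Finset.mem_singleton, not_or] at hu
  obtain ⟨hux, huy, hub, huc⟩ := hu
  clear_value x y b
  -- conjugate g by swap c u to get g' = swap x y * swap b u ∈ N
  have hg'N : swap x y * swap b u ∈ N := by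
    have h1 : swap c u * (swap x y * swap b c) * (swap c u)⁻¹ ∈ N := hNn.conj_mem _ hgN _
    have e1 : (swap c u) x = x := Equiv.swap_apply_of_ne_of_ne hxc (fun h => hux h.symm)
    have e2 : (swap c u) y = y := Equiv.swap_apply_of_ne_of_ne hyc (fun h => huy h.symm)
    have e3 : (swap c u) b = b :=
      Equiv.swap_apply_of_ne_of_ne hbc (fun h => hub h.symm)
    have e4 : (swap c u) c = u := Equiv.swap_apply_left c u
    have heq : swap c u * (swap x y * swap b c) * (swap c u)⁻¹
        = swap ((swap c u) x) ((swap c u) y) * swap ((swap c u) b) ((swap c u) c) := by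
      rw [Equiv.swap_apply_apply, Equiv.swap_apply_apply]
      group
    rw [heq, e1, e2, e3, e4] at h1
    exact h1
  -- swap b c and swap x y commute (disjoint)
  have hcomm : swap b c * swap x y = swap x y * swap b c := by
    have hdisj : (swap b c).Disjoint (swap x y) := by
      intro z
      by_cases hzb : z = b
      · right; subst hzb; exact Equiv.swap_apply_of_ne_of_ne (Ne.symm hxb) (Ne.symm hyb)
      by_cases hzc : z = c
      · right; subst hzc; exact Equiv.swap_apply_of_ne_of_ne (fun h => hxc h.symm)
          (fun h => hyc h.symm)
      · left; exact Equiv.swap_apply_of_ne_of_ne hzb hzc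
    exact hdisj.commute.eq
  -- g * g' = swap b c * swap b u is a 3-cycle in N
  have hmem : swap b c * swap b u ∈ N := by
    have h := N.mul_mem hgN hg'N
    have heq : (swap x y * swap b c) * (swap x y * swap b u) = swap b c * swap b u := by
      calc (swap x y * swap b c) * (swap x y * swap b u)
          = swap x y * (swap b c * swap x y) * swap b u := by group
        _ = swap x y * (swap x y * swap b c) * swap b u := by rw [hcomm]
        _ = (swap x y * swap x y) * (swap b c * swap b u) := by group
        _ = swap b c * swap b u := by rw [Equiv.swap_mul_self, one_mul]
    rwa [heq] at h
  refine ⟨swap b c * swap b u, hmem, ?_⟩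
  exact Equiv.Perm.isThreeCycle_swap_mul_swap_same hbc (Ne.symm hub) (fun h => huc h.symm)

/-- Any nontrivial normal subgroup of `Perm (Fin n)` (for `n ≥ 5`) contains the alternating
group. -/
lemma aux_alternating_le {n : ℕ} (hn : 5 ≤ n) (N : Subgroup (Equiv.Perm (Fin n)))
    (hNn : N.Normal) (hN : N ≠ ⊥) : alternatingGroup (Fin n) ≤ N := by
  obtain ⟨f, hfN, hf⟩ := aux_exists_threeCycle_mem hn N hNn hN
  have h5 : 5 ≤ Nat.card (Fin n) := by rwa [Nat.card_eq_fintype_card, Fintype.card_fin]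
  haveI := hNn.subgroupOf (alternatingGroup (Fin n))
  have hmem : (⟨f, hf.mem_alternatingGroup⟩ : alternatingGroup (Fin n))
      ∈ N.subgroupOf (alternatingGroup (Fin n)) := by
    rwa [Subgroup.mem_subgroupOf]
  have hle : Subgroup.normalClosure ({⟨f, hf.mem_alternatingGroup⟩} :
      Set (alternatingGroup (Fin n))) ≤ N.subgroupOf (alternatingGroup (Fin n)) :=
    Subgroup.normalClosure_le_normal (Set.singleton_subset_iff.2 hmem)
  rw [hf.alternating_normalClosure h5] at hle
  exact Subgroup.subgroupOf_eq_top.1 (top_le_iff.1 hle)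

/-- If `G` is a subgroup of `Sₙ` with `n ≥ 5` which is neither `Sₙ` nor the
alternating group `Aₙ`, then the index `[Sₙ : G]` is at least `n`. -/
theorem index_ge_of_ne_symmetric_ne_alternating (n : ℕ) (hn : 5 ≤ n)
    (G : Subgroup (Equiv.Perm (Fin n))) (hG₁ : G ≠ ⊤)
    (hG₂ : G ≠ alternatingGroup (Fin n)) :
    n ≤ G.index := by
  by_contra hcon
  push_neg at hcon
  have hidx_ne_one : G.index ≠ 1 := fun h => hG₁ (Subgroup.index_eq_one.1 h)
  set N := G.normalCore with hNdef
  have hNn : N.Normal := Subgroup.normalCore_normal G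
  -- N ≠ ⊥ : otherwise n ! = N.index ≤ (G.index)! ≤ (n-1)! < n !
  have hNbot : N ≠ ⊥ := by
    intro hbot
    have hker : N = (MulAction.toPermHom (Equiv.Perm (Fin n))
        (Equiv.Perm (Fin n) ⧸ G)).ker := Subgroup.normalCore_eq_ker G
    have hidx : N.index = Nat.card (MulAction.toPermHom (Equiv.Perm (Fin n))
        (Equiv.Perm (Fin n) ⧸ G)).range := by
      rw [hker]; exact Subgroup.index_ker _
    have hle1 : Nat.card (MulAction.toPermHom (Equiv.Perm (Fin n))
        (Equiv.Perm (Fin n) ⧸ G)).range ≤ Nat.card (Equiv.Perm (Equiv.Perm (Fin n) ⧸ G)) :=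
      Nat.card_le_card_of_injective _ Subtype.coe_injective
    have hcardperm : Nat.card (Equiv.Perm (Equiv.Perm (Fin n) ⧸ G))
        = Nat.factorial G.index := by
      classical
      haveI : Fintype (Equiv.Perm (Fin n) ⧸ G) := Fintype.ofFinite _
      rw [Nat.card_eq_fintype_card, Fintype.card_perm, ← Nat.card_eq_fintype_card,
        ← Subgroup.index_eq_card]
    have hbotidx : N.index = Nat.factorial n := by
      rw [hbot, Subgroup.index_bot, Nat.card_eq_fintype_card, Fintype.card_perm,
        Fintype.card_fin]
    have hfactle : Nat.factorial G.index ≤ Nat.factorial (n - 1) := Nat.factorial_le (by omega)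
    have hfactlt : Nat.factorial (n - 1) < Nat.factorial n := by
      have : n - 1 < n := by omega
      exact Nat.factorial_lt (by omega) |>.2 this
    omega
  have hAle : alternatingGroup (Fin n) ≤ G :=
    le_trans (aux_alternating_le hn N hNn hNbot) (Subgroup.normalCore_le G)
  -- the alternating group has index 2
  haveI : Nontrivial (Fin n) := ⟨⟨⟨0, by omega⟩, ⟨1, by omega⟩, by simp [Fin.ext_iff]⟩⟩
  have hA2 : (alternatingGroup (Fin n)).index = 2 := by
    have h1 : 2 * Nat.card (alternatingGroup (Fin n)) = Nat.card (Equiv.Perm (Fin n)) := by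
      rw [Nat.card_eq_fintype_card, Nat.card_eq_fintype_card]
      exact two_mul_card_alternatingGroup
    have h2 : (alternatingGroup (Fin n)).index * Nat.card (alternatingGroup (Fin n))
        = Nat.card (Equiv.Perm (Fin n)) := Subgroup.index_mul_card _
    have hpos : 0 < Nat.card (alternatingGroup (Fin n)) := Nat.card_pos
    exact Nat.eq_of_mul_eq_mul_right hpos (h2.trans h1.symm)
  have hrel : (alternatingGroup (Fin n)).relIndex G * G.index = 2 := by
    rw [Subgroup.relIndex_mul_index hAle, hA2]
  -- G.index ≥ 2, so relindex = 1, so G ≤ A, so G = A, contradiction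
  have hGne0 : G.index ≠ 0 := Subgroup.index_ne_zero_of_finite
  have hdvd : G.index ∣ 2 := Dvd.intro_left _ hrel
  have hGidx2 : G.index = 2 := by
    have := Nat.le_of_dvd (by norm_num) hdvd
    omega
  rw [hGidx2] at hrel
  have hrel1 : (alternatingGroup (Fin n)).relIndex G = 1 := by omega
  exact hG₂ (le_antisymm (Subgroup.relIndex_eq_one.1 hrel1) hAle)
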